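/- Let C ≥ 0 and let g : ℝ → ℝ be differentiable with g'(r) ≥ −C for all r ∈ ℝ, and let v ∈ L²(Ω) be such that g∘v ∈ L²(Ω). Then ∫_Ω B(v)(x) g(v(x)) dx ≥ −2 C E(v). -/

import Mathlib

open MeasureTheory
open scoped ENNReal

/-- The nonlocal operator `B(v)(x) := (J∗1)(x) v(x) − (J∗v)(x)`, where
`(J∗1)(x) = ∫_Ω J(x−y) dy` and `(J∗v)(x) = ∫_Ω J(x−y) v(y) dy`. -/
noncomputable def nonlocalB {d : ℕ} (Ω : Set (EuclideanSpace ℝ (Fin d)))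
    (J : EuclideanSpace ℝ (Fin d) → ℝ) (v : EuclideanSpace ℝ (Fin d) → ℝ)
    (x : EuclideanSpace ℝ (Fin d)) : ℝ :=
  (∫ y in Ω, J (x - y)) * v x - ∫ y in Ω, J (x - y) * v y

/-- The nonlocal energy `E(v) := (1/4) ∫_Ω ∫_Ω J(x−y)(v(x)−v(y))² dx dy`. -/
noncomputable def nonlocalE {d : ℕ} (Ω : Set (EuclideanSpace ℝ (Fin d)))
    (J : EuclideanSpace ℝ (Fin d) → ℝ) (v : EuclideanSpace ℝ (Fin d) → ℝ) : ℝ :=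
  (1 / 4) * ∫ x in Ω, ∫ y in Ω, J (x - y) * (v x - v y) ^ 2

section Aux

variable {d : ℕ}

local notation "E" => EuclideanSpace ℝ (Fin d)

/-- The subtraction map on the product of restricted measures is
quasi-measure-preserving into `volume`. -/
lemma aux_quasi_sub (Ω : Set E) :
    Measure.QuasiMeasurePreserving (fun p : E × E => p.1 - p.2)
      ((volume.restrict Ω).prod (volume.restrict Ω)) volume := by
  refine ⟨measurable_fst.sub measurable_snd, ?_⟩
  refine Measure.AbsolutelyContinuous.mk fun s hs hs0 => ?_
  rw [Measure.map_apply (show Measurable (fun p : E × E => p.1 - p.2) from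
      measurable_fst.sub measurable_snd) hs,
    Measure.measure_prod_null ((show Measurable (fun p : E × E => p.1 - p.2) from
      measurable_fst.sub measurable_snd) hs)]
  refine Filter.Eventually.of_forall fun x => ?_
  show (volume.restrict Ω) ((fun y : E => x - y) ⁻¹' s) = 0
  refine le_antisymm ?_ zero_le'
  calc (volume.restrict Ω) ((fun y : E => x - y) ⁻¹' s)
      ≤ volume ((fun y : E => x - y) ⁻¹' s) := Measure.restrict_apply_le _ _
    _ = volume s :=
        (Measure.measurePreserving_sub_left volume x).measure_preimage
          hs.nullMeasurableSet
    _ = 0 := hs0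

lemma aux_quasi_fst (Ω : Set E) :
    Measure.QuasiMeasurePreserving (Prod.fst : E × E → E)
      ((volume.restrict Ω).prod (volume.restrict Ω)) (volume.restrict Ω) := by
  refine ⟨measurable_fst, ?_⟩
  rw [Measure.map_fst_prod]
  refine Measure.AbsolutelyContinuous.mk fun s _ hs0 => ?_
  simp [hs0]

lemma aux_quasi_snd (Ω : Set E) :
    Measure.QuasiMeasurePreserving (Prod.snd : E × E → E)
      ((volume.restrict Ω).prod (volume.restrict Ω)) (volume.restrict Ω) := by
  refine ⟨measurable_snd, ?_⟩
  rw [Measure.map_snd_prod]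
  refine Measure.AbsolutelyContinuous.mk fun s _ hs0 => ?_
  simp [hs0]

/-- Key integrability: `J(x−y) w(x)` is integrable on `Ω × Ω` when `J ∈ L¹(ℝ^d)`
and `w ∈ L¹(Ω)`. -/
lemma aux_integrable_mul_left {Ω : Set E} {J : E → ℝ} (hJint : Integrable J)
    {w : E → ℝ} (hw : Integrable w (volume.restrict Ω)) :
    Integrable (fun p : E × E => J (p.1 - p.2) * w p.1)
      ((volume.restrict Ω).prod (volume.restrict Ω)) := by
  set μ := volume.restrict Ω with hμdef
  have hJm : AEStronglyMeasurable (fun p : E × E => J (p.1 - p.2)) (μ.prod μ) :=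
    hJint.aestronglyMeasurable.comp_quasiMeasurePreserving (aux_quasi_sub Ω)
  have hwm : AEStronglyMeasurable (fun p : E × E => w p.1) (μ.prod μ) :=
    hw.aestronglyMeasurable.comp_quasiMeasurePreserving (aux_quasi_fst Ω)
  refine ⟨hJm.mul hwm, ?_⟩
  rw [HasFiniteIntegral]
  have hmeas : AEMeasurable
      (fun p : E × E => ((‖J (p.1 - p.2) * w p.1‖₊ : ℝ≥0∞))) (μ.prod μ) :=
    (hJm.mul hwm).enorm
  calc ∫⁻ p, (‖J (p.1 - p.2) * w p.1‖₊ : ℝ≥0∞) ∂(μ.prod μ)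
      = ∫⁻ x, ∫⁻ y, (‖J (x - y) * w x‖₊ : ℝ≥0∞) ∂μ ∂μ := lintegral_prod _ hmeas
    _ = ∫⁻ x, (∫⁻ y, (‖J (x - y)‖₊ : ℝ≥0∞) ∂μ) * (‖w x‖₊ : ℝ≥0∞) ∂μ := by
        refine lintegral_congr fun x => ?_
        simp_rw [nnnorm_mul, ENNReal.coe_mul]
        rw [lintegral_mul_const' _ _ ENNReal.coe_ne_top]
    _ ≤ ∫⁻ x, (∫⁻ z, (‖J z‖₊ : ℝ≥0∞) ∂volume) * (‖w x‖₊ : ℝ≥0∞) ∂μ := by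
        refine lintegral_mono fun x => ?_
        refine mul_le_mul_left ?_ _
        calc ∫⁻ y, (‖J (x - y)‖₊ : ℝ≥0∞) ∂μ
            ≤ ∫⁻ y, (‖J (x - y)‖₊ : ℝ≥0∞) ∂volume :=
              lintegral_mono' Measure.restrict_le_self le_rfl
          _ = ∫⁻ z, (‖J z‖₊ : ℝ≥0∞) ∂volume :=
              (Measure.measurePreserving_sub_left volume x).lintegral_comp_emb
                (MeasurableEquiv.subLeft x).measurableEmbedding
                (fun z => (‖J z‖₊ : ℝ≥0∞))
    _ = (∫⁻ z, (‖J z‖₊ : ℝ≥0∞) ∂volume) * ∫⁻ x, (‖w x‖₊ : ℝ≥0∞) ∂μ :=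
        lintegral_const_mul' _ _ hJint.hasFiniteIntegral.ne
    _ < ⊤ := ENNReal.mul_lt_top hJint.hasFiniteIntegral hw.hasFiniteIntegral

/-- Symmetric version: `J(x−y) w(y)` is integrable on `Ω × Ω`. -/
lemma aux_integrable_mul_right {Ω : Set E} {J : E → ℝ} (hJint : Integrable J)
    (hJeven : ∀ z, J (-z) = J z)
    {w : E → ℝ} (hw : Integrable w (volume.restrict Ω)) :
    Integrable (fun p : E × E => J (p.1 - p.2) * w p.2)
      ((volume.restrict Ω).prod (volume.restrict Ω)) := by
  have h := (aux_integrable_mul_left hJint hw (Ω := Ω)).swap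
  have heq : ((fun p : E × E => J (p.1 - p.2) * w p.1) ∘ Prod.swap)
      = fun p : E × E => J (p.1 - p.2) * w p.2 := by
    funext p
    show J (p.2 - p.1) * w p.2 = J (p.1 - p.2) * w p.2
    rw [← neg_sub p.1 p.2, hJeven]
  rwa [heq] at h

/-- `|ab| ≤ (a² + b²)/2`. -/
lemma aux_abs_mul_le (a b : ℝ) : |a * b| ≤ (a ^ 2 + b ^ 2) / 2 := by
  rw [abs_mul]
  nlinarith [sq_nonneg (|a| - |b|), sq_abs a, sq_abs b, abs_nonneg a, abs_nonneg b]

/-- Mixed integrability: `J(x−y) w₁(x) w₂(y)` is integrable on `Ω × Ω` for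
`w₁, w₂ ∈ L²(Ω)`. -/
lemma aux_integrable_mixed {Ω : Set E} {J : E → ℝ} (hJint : Integrable J)
    (hJnonneg : ∀ z, 0 ≤ J z) (hJeven : ∀ z, J (-z) = J z)
    {w₁ w₂ : E → ℝ} (hw₁ : MemLp w₁ 2 (volume.restrict Ω))
    (hw₂ : MemLp w₂ 2 (volume.restrict Ω)) :
    Integrable (fun p : E × E => J (p.1 - p.2) * (w₁ p.1 * w₂ p.2))
      ((volume.restrict Ω).prod (volume.restrict Ω)) := by
  set μ := volume.restrict Ω with hμdef
  have hJm : AEStronglyMeasurable (fun p : E × E => J (p.1 - p.2)) (μ.prod μ) :=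
    hJint.aestronglyMeasurable.comp_quasiMeasurePreserving (aux_quasi_sub Ω)
  have hw₁m : AEStronglyMeasurable (fun p : E × E => w₁ p.1) (μ.prod μ) :=
    hw₁.aestronglyMeasurable.comp_quasiMeasurePreserving (aux_quasi_fst Ω)
  have hw₂m : AEStronglyMeasurable (fun p : E × E => w₂ p.2) (μ.prod μ) :=
    hw₂.aestronglyMeasurable.comp_quasiMeasurePreserving (aux_quasi_snd Ω)
  have hbound : Integrable
      (fun p : E × E => J (p.1 - p.2) * ((w₁ p.1 ^ 2) / 2)
        + J (p.1 - p.2) * ((w₂ p.2 ^ 2) / 2)) (μ.prod μ) :=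
    (aux_integrable_mul_left hJint (hw₁.integrable_sq.div_const 2)).add
      (aux_integrable_mul_right hJint hJeven (hw₂.integrable_sq.div_const 2))
  refine Integrable.mono' hbound (hJm.mul (hw₁m.mul hw₂m))
    (Filter.Eventually.of_forall fun p => ?_)
  have h1 := aux_abs_mul_le (w₁ p.1) (w₂ p.2)
  have h2 := hJnonneg (p.1 - p.2)
  calc ‖J (p.1 - p.2) * (w₁ p.1 * w₂ p.2)‖
      = J (p.1 - p.2) * |w₁ p.1 * w₂ p.2| := by
        rw [Real.norm_eq_abs, abs_mul, abs_of_nonneg h2]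
    _ ≤ J (p.1 - p.2) * ((w₁ p.1 ^ 2 + w₂ p.2 ^ 2) / 2) := by
        exact mul_le_mul_of_nonneg_left h1 h2
    _ = J (p.1 - p.2) * ((w₁ p.1 ^ 2) / 2) + J (p.1 - p.2) * ((w₂ p.2 ^ 2) / 2) := by
        ring

/-- L¹ bound for products of L² functions. -/
lemma aux_l2_mul {α : Type*} [MeasurableSpace α] {μ : Measure α}
    {w₁ w₂ : α → ℝ} (hw₁ : MemLp w₁ 2 μ) (hw₂ : MemLp w₂ 2 μ) :
    Integrable (fun x => w₁ x * w₂ x) μ := by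
  have hbound : Integrable (fun x => (w₁ x ^ 2 + w₂ x ^ 2) / 2) μ :=
    (hw₁.integrable_sq.add hw₂.integrable_sq).div_const 2
  refine Integrable.mono' hbound
    (hw₁.aestronglyMeasurable.mul hw₂.aestronglyMeasurable)
    (Filter.Eventually.of_forall fun x => ?_)
  rw [Real.norm_eq_abs]
  exact aux_abs_mul_le (w₁ x) (w₂ x)

/-- Monotonicity consequence: `(r−s)(g(r)−g(s)) ≥ −C(r−s)²`. -/
lemma aux_semimonotone {C : ℝ} {g : ℝ → ℝ} (hg : Differentiable ℝ g)
    (hg' : ∀ r : ℝ, -C ≤ deriv g r) (r s : ℝ) :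
    -C * (r - s) ^ 2 ≤ (r - s) * (g r - g s) := by
  have hmono : Monotone (fun t => g t + C * t) := by
    refine monotone_of_deriv_nonneg (hg.add (by fun_prop)) fun x => ?_
    have hder : deriv (fun t => g t + C * t) x = deriv g x + C := by
      rw [deriv_fun_add (hg x) (by fun_prop), deriv_const_mul_field]
      simp
    rw [hder]
    linarith [hg' x]
  rcases le_total r s with h | h
  · have := hmono h
    simp only at this
    nlinarith
  · have := hmono h
    simp only at this
    nlinarith

end Aux

/-- Let `Ω ⊆ ℝ^d` be measurable of finite measure and let `J` be
integrable, nonnegative, and even.  Let `C ≥ 0` and let `g : ℝ → ℝ` be differentiable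
with `g'(r) ≥ −C` for all `r`, and let `v ∈ L²(Ω)` be such that `g∘v ∈ L²(Ω)`.  Then
`∫_Ω B(v)(x) g(v(x)) dx ≥ −2 C E(v)`. -/
theorem nonlocalB_semimonotone_test_lower_bound
    (d : ℕ) (hd : 1 ≤ d) (Ω : Set (EuclideanSpace ℝ (Fin d)))
    (hΩmeas : MeasurableSet Ω) (hΩfin : volume Ω < ⊤)
    (J : EuclideanSpace ℝ (Fin d) → ℝ) (hJint : Integrable J)
    (hJnonneg : ∀ z, 0 ≤ J z) (hJeven : ∀ z, J (-z) = J z)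
    (C : ℝ) (hC : 0 ≤ C)
    (g : ℝ → ℝ) (hg : Differentiable ℝ g) (hg' : ∀ r : ℝ, -C ≤ deriv g r)
    (v : EuclideanSpace ℝ (Fin d) → ℝ)
    (hv : MemLp v 2 (volume.restrict Ω))
    (hgv : MemLp (fun x => g (v x)) 2 (volume.restrict Ω)) :
    -2 * C * nonlocalE Ω J v ≤ ∫ x in Ω, nonlocalB Ω J v x * g (v x) := by
  set μ := volume.restrict Ω with hμdef
  set π := μ.prod μ with hπdef
  set F : (EuclideanSpace ℝ (Fin d)) × (EuclideanSpace ℝ (Fin d)) → ℝ :=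
    fun p => J (p.1 - p.2) * (v p.1 - v p.2) * g (v p.1) with hFdef
  set G : (EuclideanSpace ℝ (Fin d)) × (EuclideanSpace ℝ (Fin d)) → ℝ :=
    fun p => J (p.1 - p.2) * (v p.1 - v p.2) ^ 2 with hGdef
  set H : (EuclideanSpace ℝ (Fin d)) × (EuclideanSpace ℝ (Fin d)) → ℝ :=
    fun p => J (p.1 - p.2) * (v p.1 - v p.2) * (g (v p.1) - g (v p.2)) with hHdef
  -- integrability of the pieces
  have hA : Integrable (fun p : (EuclideanSpace ℝ (Fin d)) × (EuclideanSpace ℝ (Fin d)) =>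
      J (p.1 - p.2) * (v p.1 * g (v p.1))) π :=
    aux_integrable_mul_left hJint (aux_l2_mul hv hgv)
  have hB : Integrable (fun p : (EuclideanSpace ℝ (Fin d)) × (EuclideanSpace ℝ (Fin d)) =>
      J (p.1 - p.2) * (g (v p.1) * v p.2)) π :=
    aux_integrable_mixed hJint hJnonneg hJeven hgv hv
  have hB' : Integrable (fun p : (EuclideanSpace ℝ (Fin d)) × (EuclideanSpace ℝ (Fin d)) =>
      (J (p.1 - p.2) * v p.2) * g (v p.1)) π := by
    have heq : (fun p : (EuclideanSpace ℝ (Fin d)) × (EuclideanSpace ℝ (Fin d)) =>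
        (J (p.1 - p.2) * v p.2) * g (v p.1))
        = fun p => J (p.1 - p.2) * (g (v p.1) * v p.2) := by
      funext p; ring
    rw [heq]; exact hB
  have hF : Integrable F π := by
    have heq : F = fun p : (EuclideanSpace ℝ (Fin d)) × (EuclideanSpace ℝ (Fin d)) =>
        J (p.1 - p.2) * (v p.1 * g (v p.1)) - (J (p.1 - p.2) * v p.2) * g (v p.1) := by
      funext p; simp only [hFdef]; ring
    rw [heq]
    exact hA.sub hB'
  have hG : Integrable G π := by
    have h1 : Integrable (fun p : (EuclideanSpace ℝ (Fin d)) × (EuclideanSpace ℝ (Fin d)) =>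
        J (p.1 - p.2) * (v p.1 ^ 2)) π :=
      aux_integrable_mul_left hJint hv.integrable_sq
    have h2 : Integrable (fun p : (EuclideanSpace ℝ (Fin d)) × (EuclideanSpace ℝ (Fin d)) =>
        J (p.1 - p.2) * (v p.1 * v p.2)) π :=
      aux_integrable_mixed hJint hJnonneg hJeven hv hv
    have h3 : Integrable (fun p : (EuclideanSpace ℝ (Fin d)) × (EuclideanSpace ℝ (Fin d)) =>
        J (p.1 - p.2) * (v p.2 ^ 2)) π :=
      aux_integrable_mul_right hJint hJeven hv.integrable_sq
    have heq : G = fun p : (EuclideanSpace ℝ (Fin d)) × (EuclideanSpace ℝ (Fin d)) =>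
        (J (p.1 - p.2) * (v p.1 ^ 2) - 2 * (J (p.1 - p.2) * (v p.1 * v p.2)))
          + J (p.1 - p.2) * (v p.2 ^ 2) := by
      funext p; simp only [hGdef]; ring
    rw [heq]
    exact (h1.sub (h2.const_mul 2)).add h3
  have hFswap : Integrable (F ∘ Prod.swap) π := hF.swap
  have hHeq : H = fun p => F p + (F ∘ Prod.swap) p := by
    funext p
    have hJ : J (p.2 - p.1) = J (p.1 - p.2) := by
      rw [← neg_sub p.1 p.2]; exact hJeven _
    simp only [hHdef, hFdef, Function.comp_apply, Prod.fst_swap, Prod.snd_swap]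
    rw [hJ]; ring
  have hH : Integrable H π := by rw [hHeq]; exact hF.add hFswap
  -- Step 1: the left-hand side integral as an integral over the product
  have hstep1 : ∫ x, nonlocalB Ω J v x * g (v x) ∂μ = ∫ p, F p ∂π := by
    have hint1 : Integrable (fun x => (∫ y, J (x - y) * (v x * g (v x)) ∂μ)) μ :=
      hA.integral_prod_left
    have hint2 : Integrable (fun x => (∫ y, (J (x - y) * v y) * g (v x) ∂μ)) μ :=
      hB'.integral_prod_left
    have hFeq : ∫ p, F p ∂π
        = ∫ x, ∫ y, J (x - y) * (v x * g (v x)) ∂μ ∂μ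
          - ∫ x, ∫ y, (J (x - y) * v y) * g (v x) ∂μ ∂μ := by
      have e1 : ∫ x, ∫ y, J (x - y) * (v x * g (v x)) ∂μ ∂μ
          = ∫ p : (EuclideanSpace ℝ (Fin d)) × (EuclideanSpace ℝ (Fin d)),
              J (p.1 - p.2) * (v p.1 * g (v p.1)) ∂π :=
        integral_integral hA
      have e2 : ∫ x, ∫ y, (J (x - y) * v y) * g (v x) ∂μ ∂μ
          = ∫ p : (EuclideanSpace ℝ (Fin d)) × (EuclideanSpace ℝ (Fin d)),
              (J (p.1 - p.2) * v p.2) * g (v p.1) ∂π :=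
        integral_integral hB'
      rw [e1, e2, ← integral_sub hA hB']
      refine integral_congr_ae (Filter.Eventually.of_forall fun p => ?_)
      simp only [hFdef]
      ring
    rw [hFeq, ← integral_sub hint1 hint2]
    refine integral_congr_ae (Filter.Eventually.of_forall fun x => ?_)
    have i1 : ∫ y, J (x - y) * (v x * g (v x)) ∂μ
        = (∫ y, J (x - y) ∂μ) * (v x * g (v x)) := integral_mul_const _ _
    have i2 : ∫ y, (J (x - y) * v y) * g (v x) ∂μ
        = (∫ y, J (x - y) * v y ∂μ) * g (v x) := integral_mul_const _ _
    simp only [nonlocalB, hμdef]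
    rw [← hμdef, i1, i2]
    simp only [hμdef]
    ring
  -- Step 2: symmetrization
  have hswap : ∫ p, (F ∘ Prod.swap) p ∂π = ∫ p, F p ∂π := by
    have hmp : MeasurePreserving
        (Prod.swap : ((EuclideanSpace ℝ (Fin d)) × (EuclideanSpace ℝ (Fin d))) →
          (EuclideanSpace ℝ (Fin d)) × (EuclideanSpace ℝ (Fin d))) π π :=
      Measure.measurePreserving_swap
    exact hmp.integral_comp MeasurableEquiv.prodComm.measurableEmbedding F
  have hstep2 : ∫ p, H p ∂π = 2 * ∫ p, F p ∂π := by
    rw [hHeq, integral_add hF hFswap, hswap]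
    ring
  -- Step 3: pointwise lower bound
  have hpt : ∀ p : (EuclideanSpace ℝ (Fin d)) × (EuclideanSpace ℝ (Fin d)),
      -C * G p ≤ H p := by
    intro p
    have hkey := aux_semimonotone hg hg' (v p.1) (v p.2)
    have hJp := hJnonneg (p.1 - p.2)
    have hnn : 0 ≤ J (p.1 - p.2) *
        ((v p.1 - v p.2) * (g (v p.1) - g (v p.2)) + C * (v p.1 - v p.2) ^ 2) := by
      refine mul_nonneg hJp ?_
      nlinarith
    simp only [hHdef, hGdef]
    nlinarith
  -- Step 4: integrate the inequality
  have hstep4 : -C * ∫ p, G p ∂π ≤ ∫ p, H p ∂π := by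
    rw [← integral_const_mul]
    exact integral_mono (hG.const_mul _) hH hpt
  -- Step 5: the energy as a product integral
  have hstep5 : nonlocalE Ω J v = (1 / 4) * ∫ p, G p ∂π := by
    rw [nonlocalE]
    congr 1
    exact integral_integral hG
  -- conclude
  rw [show (∫ x in Ω, nonlocalB Ω J v x * g (v x)) = ∫ p, F p ∂π from hstep1, hstep5]
  linarith [hstep4, hstep2]
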